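/- Let F be a piecewise translation of m branches in ℝ^d and let 𝓕 : Ω → {0, …, m−1}^ℕ be its fate map. If ω ∈ {0, …, m−1}^ℕ is aperiodic, i.e. the shifts σ^n ω, n ≥ 0, are pairwise distinct (ω is not eventually periodic), then Leb(𝓕^{-1}(ω)) = 0. -/

import Mathlib

open MeasureTheory Topology Filter Set

/-- A piecewise translation map (PWT) of `m` branches in `ℝ^d`: a region `Ω`
partitioned into regions `P 0, …, P (m-1)` with null boundaries and pairwise disjoint
interiors, together with translation vectors `v i` such that `P i + v i ⊆ Ω`, and a fixed
measurable resolution `idx` of the ambiguity on overlapping boundaries. -/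
structure PWT (d m : ℕ) where
  Om : Set (Fin d → ℝ)
  P : Fin m → Set (Fin d → ℝ)
  v : Fin m → (Fin d → ℝ)
  idx : (Fin d → ℝ) → Fin m
  compact_Om : IsCompact Om
  region_Om : Om = closure (interior Om)
  compact_P : ∀ i, IsCompact (P i)
  region_P : ∀ i, P i = closure (interior (P i))
  union_P : Om = ⋃ i, P i
  disj_P : ∀ i j, i ≠ j → interior (P i) ∩ interior (P j) = ∅
  null_bd_P : ∀ i, volume (frontier (P i)) = 0
  translate_mem : ∀ i, ∀ x ∈ P i, x + v i ∈ Om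
  idx_mem : ∀ x ∈ Om, x ∈ P (idx x)
  idx_meas : Measurable idx

namespace PWT

variable {d m : ℕ}

/-- The piecewise translation map `F(x) = x + v_{i(x)}`. -/
def F (T : PWT d m) (x : Fin d → ℝ) : Fin d → ℝ := x + T.v (T.idx x)

/-- `Ω_0 = Ω`, `Ω_{n+1} = closure (F(Ω_n))`. -/
def OmSeq (T : PWT d m) : ℕ → Set (Fin d → ℝ)
  | 0 => T.Om
  | n + 1 => closure (T.F '' T.OmSeq n)

/-- The attractor `A = ⋂ₙ Ω_n`. -/
def attractor (T : PWT d m) : Set (Fin d → ℝ) := ⋂ n, T.OmSeq n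

/-- The fate map `𝓕(x) = (i(x), i(F x), i(F² x), …)`. -/
def fate (T : PWT d m) (x : Fin d → ℝ) : ℕ → Fin m := fun n => T.idx (T.F^[n] x)

/-- The matrix whose columns are the lattice generators `v_1 - v_0, …, v_d - v_0`. -/
noncomputable def latMatrix (T : PWT d (d + 1)) : Matrix (Fin d) (Fin d) ℝ :=
  Matrix.of fun i j => (T.v j.succ - T.v 0) i

/-- The canonical projection `π : ℝ^d → T = ℝ^d/L ≅ (ℝ/ℤ)^d`, expressed in the
coordinates given by the lattice basis `v_1 - v_0, …, v_d - v_0` of `L`. -/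
noncomputable def torusProj (T : PWT d (d + 1)) (x : Fin d → ℝ) : Fin d → AddCircle (1 : ℝ) :=
  fun i => ((T.latMatrix⁻¹.mulVec x) i : AddCircle (1 : ℝ))

end PWT


/-- For a piecewise translation of `m` branches in `ℝ^d` with fate map `𝓕`,
if `ω` is aperiodic (its shifts are pairwise distinct), then `Leb(𝓕⁻¹(ω)) = 0`. -/
theorem pwt_aperiodic_fate_null {d m : ℕ} (T : PWT d m) (ω : ℕ → Fin m)
    (haper : ∀ n₁ n₂ : ℕ, n₁ ≠ n₂ →
      (fun k => ω (n₁ + k)) ≠ (fun k => ω (n₂ + k))) :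
    volume {x | x ∈ T.Om ∧ T.fate x = ω} = 0 := by
  classical
  set G : ℕ → Set (Fin d → ℝ) :=
    fun n => {x | x ∈ T.Om ∧ T.fate x = fun k => ω (n + k)} with hG
  set E := {x | x ∈ T.Om ∧ T.fate x = ω} with hEdef
  have hFmeas : Measurable T.F :=
    measurable_id.add ((Measurable.of_discrete (f := T.v)).comp T.idx_meas)
  have hfmeas : ∀ n, Measurable (fun x => T.fate x n) := fun n =>
    T.idx_meas.comp (hFmeas.iterate n)
  have hmeasFate : ∀ (ρ : ℕ → Fin m),
      MeasurableSet {x | x ∈ T.Om ∧ T.fate x = ρ} := by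
    intro ρ
    have hset : {x | x ∈ T.Om ∧ T.fate x = ρ} =
        T.Om ∩ ⋂ n, (fun x => T.fate x n) ⁻¹' {ρ n} := by
      ext x
      simp [funext_iff, Set.mem_iInter]
    rw [hset]
    exact T.compact_Om.measurableSet.inter
      (MeasurableSet.iInter fun n => (hfmeas n) (measurableSet_singleton _))
  have hFOm : ∀ x ∈ T.Om, T.F x ∈ T.Om := fun x hx =>
    T.translate_mem _ x (T.idx_mem x hx)
  have hiterOm : ∀ n, ∀ x ∈ T.Om, T.F^[n] x ∈ T.Om := by
    intro n
    induction n with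
    | zero => simp
    | succ n ih =>
      intro x hx
      rw [Function.iterate_succ_apply']
      exact hFOm _ (ih x hx)
  set w : ℕ → (Fin d → ℝ) := fun n => ∑ k ∈ Finset.range n, T.v (ω k) with hw
  have hiter : ∀ x ∈ E, ∀ n, T.F^[n] x = x + w n := by
    intro x hx n
    induction n with
    | zero => simp [hw]
    | succ n ih =>
      have hidx : T.idx (T.F^[n] x) = ω n := congrFun hx.2 n
      rw [Function.iterate_succ_apply']
      show T.F^[n] x + T.v (T.idx (T.F^[n] x)) = _
      rw [hidx, ih, hw]
      simp only []
      rw [Finset.sum_range_succ, ← add_assoc]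
  have hshift : ∀ x ∈ E, ∀ n, T.fate (T.F^[n] x) = fun k => ω (n + k) := by
    intro x hx n
    funext k
    show T.idx (T.F^[k] (T.F^[n] x)) = ω (n + k)
    rw [← Function.iterate_add_apply]
    have : T.fate x (k + n) = ω (k + n) := congrFun hx.2 (k + n)
    simpa [Nat.add_comm, PWT.fate] using this
  have hEle : ∀ n, volume E ≤ volume (G n) := by
    intro n
    have hsub : (fun y => y + (-(w n))) ⁻¹' E ⊆ G n := by
      intro y hy
      have hx : y + (-(w n)) ∈ E := hy
      have hyield : y = T.F^[n] (y + (-(w n))) := by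
        rw [hiter _ hx n]; abel
      constructor
      · rw [hyield]; exact hiterOm n _ hx.1
      · rw [hyield]; exact hshift _ hx n
    calc volume E = volume ((fun y => y + (-(w n))) ⁻¹' E) :=
          (measure_preimage_add_right volume (-(w n)) E).symm
      _ ≤ volume (G n) := measure_mono hsub
  have hdisj : Pairwise (Function.onFun Disjoint G) := by
    intro n₁ n₂ hne
    rw [Function.onFun, Set.disjoint_left]
    intro y hy1 hy2
    exact haper n₁ n₂ hne (hy1.2.symm.trans hy2.2)
  have hsum : ∑' n, volume (G n) ≤ volume T.Om := by
    rw [← measure_iUnion hdisj (fun n => hmeasFate _)]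
    exact measure_mono (Set.iUnion_subset fun n x hx => hx.1)
  by_contra h
  have htop : (⊤ : ENNReal) ≤ volume T.Om := by
    calc (⊤ : ENNReal) = ∑' _ : ℕ, volume E :=
          (ENNReal.tsum_const_eq_top_of_ne_zero h).symm
      _ ≤ ∑' n, volume (G n) := ENNReal.tsum_le_tsum hEle
      _ ≤ volume T.Om := hsum
  exact (T.compact_Om.measure_lt_top).not_ge htop
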